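/- The linear span of {h_k : k ≥ 2} is dense in H² with respect to the topology of uniform convergence on compact subsets of the unit disk, where h_k(z) = (1/(1-z))·log((1+z+...+z^{k-1})/k). -/

import Mathlib

open Complex Finset

noncomputable section Stmt18Aux

private def phi (k : ℕ) (z : ℂ) : ℂ := Complex.log ((∑ i ∈ Finset.range k, z ^ i) / k)

private def Approx (F : ℂ → ℂ) : Prop :=
  ∀ r : ℝ, 0 ≤ r → r < 1 → ∀ ε : ℝ, 0 < ε →
    ∃ (N : ℕ) (c : ℕ → ℂ), ∀ z : ℂ, ‖z‖ ≤ r →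
      ‖F z - ∑ k ∈ Finset.Icc 2 N, c k * phi k z‖ ≤ ε

/-- Tail bound for the log series. -/
private lemma log_tail (M : ℕ) {w : ℂ} {r : ℝ} (hw : ‖w‖ ≤ r) (hr : r < 1) :
    ‖(-Complex.log (1 - w)) - ∑ n ∈ Finset.range M, w ^ n / n‖ ≤ r ^ M / (1 - r) := by
  have hr0 : 0 ≤ r := le_trans (norm_nonneg w) hw
  have hw1 : ‖w‖ < 1 := lt_of_le_of_lt hw hr
  have h := Complex.hasSum_taylorSeries_neg_log hw1
  have h2 : HasSum (fun n : ℕ => w ^ (n + M) / (n + M : ℕ))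
      ((-Complex.log (1 - w)) - ∑ n ∈ Finset.range M, w ^ n / (n : ℕ)) := by
    refine (hasSum_nat_add_iff (f := fun n : ℕ => w ^ n / (n : ℕ)) M).mpr ?_
    rw [sub_add_cancel]
    exact h
  have hb : ∀ n : ℕ, ‖w ^ (n + M) / ((n + M : ℕ) : ℂ)‖ ≤ r ^ M * r ^ n := by
    intro n
    rcases Nat.eq_zero_or_pos (n + M) with h0 | hpos
    · rw [h0]
      simp only [pow_zero, Nat.cast_zero, div_zero, norm_zero]
      positivity
    · have h1 : (1 : ℝ) ≤ ‖((n + M : ℕ) : ℂ)‖ := by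
        rw [Complex.norm_natCast]
        exact_mod_cast hpos
      calc ‖w ^ (n + M) / ((n + M : ℕ) : ℂ)‖ = ‖w ^ (n + M)‖ / ‖((n + M : ℕ) : ℂ)‖ := by
            rw [norm_div]
        _ ≤ ‖w ^ (n + M)‖ / 1 := by
            apply div_le_div_of_nonneg_left (norm_nonneg _) one_pos h1
        _ = ‖w‖ ^ (n + M) := by rw [div_one, norm_pow]
        _ ≤ r ^ (n + M) := pow_le_pow_left₀ (norm_nonneg _) hw _
        _ = r ^ M * r ^ n := by rw [pow_add, mul_comm]
  have hsum_geo : Summable (fun n : ℕ => r ^ M * r ^ n) :=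
    (summable_geometric_of_lt_one hr0 hr).mul_left _
  have hsumnorm : Summable (fun n : ℕ => ‖w ^ (n + M) / ((n + M : ℕ) : ℂ)‖) :=
    Summable.of_nonneg_of_le (fun n => norm_nonneg _) hb hsum_geo
  calc ‖(-Complex.log (1 - w)) - ∑ n ∈ Finset.range M, w ^ n / (n : ℕ)‖
      = ‖∑' n : ℕ, w ^ (n + M) / ((n + M : ℕ) : ℂ)‖ := by rw [h2.tsum_eq]
    _ ≤ ∑' n : ℕ, ‖w ^ (n + M) / ((n + M : ℕ) : ℂ)‖ := norm_tsum_le_tsum_norm hsumnorm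
    _ ≤ ∑' n : ℕ, r ^ M * r ^ n := Summable.tsum_le_tsum hb hsumnorm hsum_geo
    _ = r ^ M * (1 - r)⁻¹ := by rw [tsum_mul_left, tsum_geometric_of_lt_one hr0 hr]
    _ = r ^ M / (1 - r) := by rw [div_eq_mul_inv]

private lemma re_one_sub_pos {w : ℂ} (hw : ‖w‖ < 1) : 0 < (1 - w).re := by
  have : |w.re| < 1 := lt_of_le_of_lt (Complex.abs_re_le_norm w) hw
  have := abs_lt.mp this
  simp only [Complex.sub_re, Complex.one_re]
  linarith [this.2]

private lemma one_sub_ne {w : ℂ} (hw : ‖w‖ < 1) : (1 : ℂ) - w ≠ 0 := by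
  intro h
  have := re_one_sub_pos hw
  rw [h] at this
  simp at this

/-- The key logarithm identity. -/
private lemma phi_eq {k : ℕ} (hk : 2 ≤ k) {z : ℂ} (hz : ‖z‖ < 1) :
    phi k z = Complex.log (1 - z ^ k) - Complex.log (1 - z) - Real.log k := by
  have hzk : ‖z ^ k‖ < 1 := by
    rw [norm_pow]
    exact pow_lt_one₀ (norm_nonneg z) hz (by omega)
  have hz1 : z ≠ 1 := by
    intro h; rw [h] at hz; simp at hz
  have hk0 : (k : ℂ) ≠ 0 := by
    exact_mod_cast (by omega : k ≠ 0)
  have ha : 0 < (1 - z ^ k).re := re_one_sub_pos hzk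
  have hb : 0 < (1 - z).re := re_one_sub_pos hz
  have haz : (1 : ℂ) - z ^ k ≠ 0 := one_sub_ne hzk
  have hbz : (1 : ℂ) - z ≠ 0 := one_sub_ne hz
  set v : ℂ := (1 - z) * k with hv
  have hvre : 0 < v.re := by
    rw [hv]
    have : ((1 - z) * (k : ℂ)).re = (1 - z).re * (k : ℝ) := by
      simp [Complex.mul_re]
    rw [this]
    have : (0 : ℝ) < k := by exact_mod_cast (by omega : 0 < k)
    positivity
  have hvz : v ≠ 0 := mul_ne_zero hbz hk0
  have hsum : (∑ i ∈ Finset.range k, z ^ i) / (k : ℂ) = (1 - z ^ k) * v⁻¹ := by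
    rw [geom_sum_eq hz1, hv, div_div,
      show (z - 1) * (k : ℂ) = -((1 - z) * k) by ring,
      show z ^ k - 1 = -((1 : ℂ) - z ^ k) by ring, neg_div_neg_eq, div_eq_mul_inv]
  have harg_a : |Complex.arg (1 - z ^ k)| < Real.pi / 2 :=
    Complex.abs_arg_lt_pi_div_two_iff.mpr (Or.inl ha)
  have harg_b : |Complex.arg (1 - z)| < Real.pi / 2 :=
    Complex.abs_arg_lt_pi_div_two_iff.mpr (Or.inl hb)
  have harg_v : |Complex.arg v| < Real.pi / 2 :=
    Complex.abs_arg_lt_pi_div_two_iff.mpr (Or.inl hvre)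
  have hvinv_re : 0 < (v⁻¹).re := by
    rw [Complex.inv_re]
    exact div_pos hvre (Complex.normSq_pos.mpr hvz)
  have harg_vinv : |Complex.arg v⁻¹| < Real.pi / 2 :=
    Complex.abs_arg_lt_pi_div_two_iff.mpr (Or.inl hvinv_re)
  have hpi := Real.pi_pos
  have hlog1 : Complex.log ((1 - z ^ k) * v⁻¹) = Complex.log (1 - z ^ k) + Complex.log v⁻¹ := by
    apply Complex.log_mul haz (inv_ne_zero hvz)
    constructor
    · have := abs_lt.mp harg_a
      have := abs_lt.mp harg_vinv
      linarith [(abs_lt.mp harg_a).1, (abs_lt.mp harg_vinv).1]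
    · linarith [(abs_lt.mp harg_a).2, (abs_lt.mp harg_vinv).2]
  have hlog2 : Complex.log v⁻¹ = -Complex.log v := by
    apply Complex.log_inv
    intro h
    rw [h] at harg_v
    rw [abs_of_pos hpi] at harg_v
    linarith
  have hlog3 : Complex.log v = Complex.log (1 - z) + Complex.log (k : ℂ) := by
    rw [hv]
    apply Complex.log_mul hbz hk0
    rw [Complex.natCast_arg]
    constructor
    · linarith [(abs_lt.mp harg_b).1]
    · linarith [(abs_lt.mp harg_b).2]
  have hlogk : Complex.log (k : ℂ) = (Real.log k : ℂ) := Complex.natCast_log.symm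
  rw [phi, hsum, hlog1, hlog2, hlog3, hlogk]
  ring

private lemma sum_extend (c : ℕ → ℂ) {N N' : ℕ} (h : N ≤ N') (g : ℕ → ℂ) :
    ∑ k ∈ Finset.Icc 2 N', (if k ∈ Finset.Icc 2 N then c k else 0) * g k
      = ∑ k ∈ Finset.Icc 2 N, c k * g k := by
  rw [← Finset.sum_subset (Finset.Icc_subset_Icc_right h)
    (fun x _ hx => by rw [if_neg hx, zero_mul])]
  exact Finset.sum_congr rfl (fun x hx => by rw [if_pos hx])

private lemma approx_zero : Approx (fun _ => (0 : ℂ)) := by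
  intro r _ _ ε hε
  exact ⟨0, fun _ => 0, fun z _ => by simp [le_of_lt hε]⟩

private lemma approx_add {F G : ℂ → ℂ} (hF : Approx F) (hG : Approx G) :
    Approx (fun z => F z + G z) := by
  intro r hr0 hr1 ε hε
  obtain ⟨N₁, c₁, h₁⟩ := hF r hr0 hr1 (ε / 2) (by linarith)
  obtain ⟨N₂, c₂, h₂⟩ := hG r hr0 hr1 (ε / 2) (by linarith)
  refine ⟨max N₁ N₂, fun k => (if k ∈ Finset.Icc 2 N₁ then c₁ k else 0)
    + (if k ∈ Finset.Icc 2 N₂ then c₂ k else 0), fun z hz => ?_⟩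
  have e : ∑ k ∈ Finset.Icc 2 (max N₁ N₂),
      ((if k ∈ Finset.Icc 2 N₁ then c₁ k else 0)
        + (if k ∈ Finset.Icc 2 N₂ then c₂ k else 0)) * phi k z
      = ∑ k ∈ Finset.Icc 2 N₁, c₁ k * phi k z + ∑ k ∈ Finset.Icc 2 N₂, c₂ k * phi k z := by
    simp_rw [add_mul, Finset.sum_add_distrib]
    rw [sum_extend c₁ (le_max_left _ _), sum_extend c₂ (le_max_right _ _)]
  rw [e]
  calc ‖F z + G z - (∑ k ∈ Finset.Icc 2 N₁, c₁ k * phi k z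
          + ∑ k ∈ Finset.Icc 2 N₂, c₂ k * phi k z)‖
      = ‖(F z - ∑ k ∈ Finset.Icc 2 N₁, c₁ k * phi k z)
          + (G z - ∑ k ∈ Finset.Icc 2 N₂, c₂ k * phi k z)‖ := by ring_nf
    _ ≤ ‖F z - ∑ k ∈ Finset.Icc 2 N₁, c₁ k * phi k z‖
          + ‖G z - ∑ k ∈ Finset.Icc 2 N₂, c₂ k * phi k z‖ := norm_add_le _ _
    _ ≤ ε / 2 + ε / 2 := add_le_add (h₁ z hz) (h₂ z hz)
    _ = ε := by ring

private lemma approx_smul (a : ℂ) {F : ℂ → ℂ} (hF : Approx F) :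
    Approx (fun z => a * F z) := by
  rcases eq_or_ne a 0 with rfl | ha
  · simpa using approx_zero
  intro r hr0 hr1 ε hε
  obtain ⟨N, c, h⟩ := hF r hr0 hr1 (ε / ‖a‖) (div_pos hε (norm_pos_iff.mpr ha))
  refine ⟨N, fun k => a * c k, fun z hz => ?_⟩
  have e : ∑ k ∈ Finset.Icc 2 N, a * c k * phi k z
      = a * ∑ k ∈ Finset.Icc 2 N, c k * phi k z := by
    rw [Finset.mul_sum]; exact Finset.sum_congr rfl (fun x _ => by ring)
  rw [e, ← mul_sub, norm_mul]
  calc ‖a‖ * ‖F z - ∑ k ∈ Finset.Icc 2 N, c k * phi k z‖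
      ≤ ‖a‖ * (ε / ‖a‖) := by
        exact mul_le_mul_of_nonneg_left (h z hz) (norm_nonneg a)
    _ = ε := by
        rw [mul_div_cancel₀ ε (norm_ne_zero_iff.mpr ha)]

private lemma approx_congr {F G : ℂ → ℂ} (hF : Approx F)
    (h : ∀ z : ℂ, ‖z‖ < 1 → F z = G z) : Approx G := by
  intro r hr0 hr1 ε hε
  obtain ⟨N, c, hN⟩ := hF r hr0 hr1 ε hε
  exact ⟨N, c, fun z hz => by rw [← h z (lt_of_le_of_lt hz hr1)]; exact hN z hz⟩

private lemma approx_sub {F G : ℂ → ℂ} (hF : Approx F) (hG : Approx G) :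
    Approx (fun z => F z - G z) := by
  have := approx_add hF (approx_smul (-1) hG)
  exact approx_congr this (fun z _ => by ring)

private lemma approx_sum {ι : Type*} (s : Finset ι) (F : ι → ℂ → ℂ)
    (h : ∀ i ∈ s, Approx (F i)) : Approx (fun z => ∑ i ∈ s, F i z) := by
  classical
  induction s using Finset.induction_on with
  | empty => simpa using approx_zero
  | @insert i s hi ih =>
    have h1 : Approx (F i) := h i (Finset.mem_insert_self i s)
    have h2 : Approx (fun z => ∑ j ∈ s, F j z) :=
      ih (fun j hj => h j (Finset.mem_insert_of_mem hj))
    exact approx_congr (approx_add h1 h2)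
      (fun z _ => by rw [Finset.sum_insert hi])

private lemma approx_phi {k : ℕ} (hk : 2 ≤ k) : Approx (phi k) := by
  intro r hr0 hr1 ε hε
  classical
  refine ⟨k, fun j => if j = k then 1 else 0, fun z hz => ?_⟩
  have e : ∑ j ∈ Finset.Icc 2 k, (if j = k then (1:ℂ) else 0) * phi j z = phi k z := by
    rw [Finset.sum_eq_single k]
    · simp
    · intro b _ hb; rw [if_neg hb, zero_mul]
    · intro hk'; exact absurd (Finset.mem_Icc.mpr ⟨hk, le_refl k⟩) hk'
  rw [e]
  simp [le_of_lt hε]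

private lemma approx_limit {F : ℂ → ℂ}
    (h : ∀ r : ℝ, 0 ≤ r → r < 1 → ∀ ε : ℝ, 0 < ε →
      ∃ G : ℂ → ℂ, Approx G ∧ ∀ z : ℂ, ‖z‖ ≤ r → ‖F z - G z‖ ≤ ε) : Approx F := by
  intro r hr0 hr1 ε hε
  obtain ⟨G, hG, hFG⟩ := h r hr0 hr1 (ε / 2) (by linarith)
  obtain ⟨N, c, hN⟩ := hG r hr0 hr1 (ε / 2) (by linarith)
  refine ⟨N, c, fun z hz => ?_⟩
  calc ‖F z - ∑ k ∈ Finset.Icc 2 N, c k * phi k z‖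
      = ‖(F z - G z) + (G z - ∑ k ∈ Finset.Icc 2 N, c k * phi k z)‖ := by ring_nf
    _ ≤ ‖F z - G z‖ + ‖G z - ∑ k ∈ Finset.Icc 2 N, c k * phi k z‖ := norm_add_le _ _
    _ ≤ ε / 2 + ε / 2 := add_le_add (hFG z hz) (hN z hz)
    _ = ε := by ring

private lemma norm_log_le {w : ℂ} {r : ℝ} (hw : ‖w‖ ≤ r) (hr : r < 1) :
    ‖Complex.log (1 - w)‖ ≤ r / (1 - r) := by
  have := log_tail 1 hw hr
  simpa using this

private lemma exists_pow_small {r : ℝ} (hr0 : 0 ≤ r) (hr1 : r < 1) (n₀ : ℕ) {δ : ℝ}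
    (hδ : 0 < δ) : ∃ K : ℕ, n₀ ≤ K ∧ r ^ (K + 1) ≤ δ := by
  have ht : Filter.Tendsto (fun n : ℕ => r ^ n) Filter.atTop (nhds 0) :=
    tendsto_pow_atTop_nhds_zero_of_lt_one (by linarith) hr1
  obtain ⟨n₁, hn₁⟩ := Filter.eventually_atTop.mp (ht.eventually (gt_mem_nhds hδ))
  refine ⟨max n₀ n₁, le_max_left _ _, ?_⟩
  exact le_of_lt (hn₁ (max n₀ n₁ + 1) (le_trans (le_max_right _ _) (Nat.le_succ _)))

private lemma approx_one : Approx (fun _ => (1 : ℂ)) := by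
  apply approx_limit
  intro r hr0 hr1 ε hε
  have h1r : 0 < 1 - r := by linarith
  set C : ℝ := r / (1 - r) with hC
  have hC0 : 0 ≤ C := div_nonneg hr0 (le_of_lt h1r)
  set x : ℝ := max 1 (2 * C / ε) with hx
  have hx1 : 1 ≤ x := le_max_left _ _
  obtain ⟨k, hk⟩ := exists_nat_ge (Real.exp x)
  have hek : Real.exp x ≤ k := hk
  have hk2 : 2 ≤ k := by
    have h2 : (2 : ℝ) ≤ Real.exp x := by
      have := Real.add_one_le_exp x
      linarith
    exact_mod_cast le_trans h2 hek
  have hlogk : x ≤ Real.log k := by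
    rw [← Real.log_exp x]
    exact Real.log_le_log (Real.exp_pos x) hek
  have hlogk0 : 0 < Real.log k := lt_of_lt_of_le (by linarith) hlogk
  have hbound : 2 * C / Real.log k ≤ ε := by
    rw [div_le_iff₀ hlogk0]
    have h2 : 2 * C / ε ≤ Real.log k := le_trans (le_max_right _ _) hlogk
    rw [div_le_iff₀ hε] at h2
    linarith [h2]
  refine ⟨fun z => (-(Real.log k : ℂ)⁻¹) * phi k z, approx_smul _ (approx_phi hk2),
    fun z hz => ?_⟩
  have hz1 : ‖z‖ < 1 := lt_of_le_of_lt hz hr1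
  have hlogkC : ((Real.log k : ℝ) : ℂ) ≠ 0 := by
    exact_mod_cast ne_of_gt hlogk0
  have e : (1 : ℂ) - (-(Real.log k : ℂ)⁻¹) * phi k z
      = ((Real.log k : ℝ) : ℂ)⁻¹ * (Complex.log (1 - z ^ k) - Complex.log (1 - z)) := by
    have hclog : Complex.log (k : ℂ) ≠ 0 := by
      rw [← Complex.natCast_log]; exact hlogkC
    rw [phi_eq hk2 hz1, Complex.natCast_log]
    field_simp
    ring
  rw [e, norm_mul]
  have hzk : ‖z ^ k‖ ≤ r := by
    rw [norm_pow]
    exact le_trans (pow_le_of_le_one (norm_nonneg z) (le_of_lt hz1) (by omega)) hz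
  have h1 : ‖Complex.log (1 - z ^ k)‖ ≤ C := norm_log_le hzk hr1
  have h2 : ‖Complex.log (1 - z)‖ ≤ C := norm_log_le hz hr1
  have hni : ‖((Real.log k : ℝ) : ℂ)⁻¹‖ = (Real.log k)⁻¹ := by
    rw [norm_inv, Complex.norm_real, Real.norm_eq_abs, abs_of_pos hlogk0]
  rw [hni]
  calc (Real.log k)⁻¹ * ‖Complex.log (1 - z ^ k) - Complex.log (1 - z)‖
      ≤ (Real.log k)⁻¹ * (2 * C) := by
        apply mul_le_mul_of_nonneg_left _ (inv_nonneg.mpr (le_of_lt hlogk0))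
        calc ‖Complex.log (1 - z ^ k) - Complex.log (1 - z)‖
            ≤ ‖Complex.log (1 - z ^ k)‖ + ‖Complex.log (1 - z)‖ := norm_sub_le _ _
          _ ≤ 2 * C := by linarith
    _ = 2 * C / Real.log k := by rw [div_eq_mul_inv, mul_comm]
    _ ≤ ε := hbound

private lemma approx_const (a : ℂ) : Approx (fun _ => a) :=
  approx_congr (approx_smul a approx_one) (fun z _ => mul_one a)

private lemma approx_A : Approx (fun z => -Complex.log (1 - z)) := by
  apply approx_limit
  intro r hr0 hr1 ε hε
  have h1r : 0 < 1 - r := by linarith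
  obtain ⟨K, hK1, hKb⟩ := exists_pow_small hr0 hr1 1 (mul_pos hε h1r)
  set k := K + 1 with hkdef
  have hk2 : 2 ≤ k := by omega
  refine ⟨fun z => phi k z + ((Real.log k : ℝ) : ℂ),
    approx_add (approx_phi hk2) (approx_const _), fun z hz => ?_⟩
  have hz1 : ‖z‖ < 1 := lt_of_le_of_lt hz hr1
  have e : -Complex.log (1 - z) - (phi k z + ((Real.log k : ℝ) : ℂ))
      = -Complex.log (1 - z ^ k) := by
    rw [phi_eq hk2 hz1]
    ring
  rw [e, norm_neg]
  have hzk : ‖z ^ k‖ ≤ r ^ k := by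
    rw [norm_pow]
    exact pow_le_pow_left₀ (norm_nonneg z) hz k
  have hrk : r ^ k < 1 := lt_of_le_of_lt (pow_le_of_le_one hr0 (le_of_lt hr1) (by omega))
    hr1
  calc ‖Complex.log (1 - z ^ k)‖ ≤ r ^ k / (1 - r ^ k) := norm_log_le hzk hrk
    _ ≤ r ^ k / (1 - r) := by
        apply div_le_div_of_nonneg_left (pow_nonneg hr0 k) h1r
        have : r ^ k ≤ r := pow_le_of_le_one hr0 (le_of_lt hr1) (by omega)
        linarith
    _ ≤ ε := by
        rw [div_le_iff₀ h1r]
        exact hKb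
    
private lemma approx_Am {m : ℕ} (hm : 1 ≤ m) :
    Approx (fun z => -Complex.log (1 - z ^ m)) := by
  rcases eq_or_lt_of_le hm with h1 | h2
  · apply approx_congr approx_A
    intro z _
    rw [← h1, pow_one]
  · have hm2 : 2 ≤ m := h2
    apply approx_congr (approx_sub (approx_sub approx_A (approx_phi hm2))
      (approx_const ((Real.log m : ℝ) : ℂ)))
    intro z hz
    rw [phi_eq hm2 hz]
    ring

private lemma geom_Ioc_le {r : ℝ} (hr0 : 0 ≤ r) (hr1 : r < 1) (a b : ℕ) :
    ∑ j ∈ Finset.Ioc a b, r ^ j ≤ r ^ (a + 1) / (1 - r) := by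
  have hset : Finset.Ioc a b = Finset.Ico (a + 1) (b + 1) := by
    ext x; simp only [Finset.mem_Ioc, Finset.mem_Ico]; omega
  rw [hset, Finset.sum_Ico_eq_sum_range]
  calc ∑ i ∈ Finset.range (b + 1 - (a + 1)), r ^ (a + 1 + i)
      = r ^ (a + 1) * ∑ i ∈ Finset.range (b + 1 - (a + 1)), r ^ i := by
        rw [Finset.mul_sum]; exact Finset.sum_congr rfl fun i _ => by rw [pow_add]
    _ ≤ r ^ (a + 1) * (1 - r)⁻¹ := by
        apply mul_le_mul_of_nonneg_left _ (pow_nonneg hr0 _)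
        calc (∑ i ∈ Finset.range (b + 1 - (a + 1)), r ^ i) ≤ ∑' i : ℕ, r ^ i :=
              Summable.sum_le_tsum _ (fun i _ => pow_nonneg hr0 i)
                (summable_geometric_of_lt_one hr0 hr1)
          _ = (1 - r)⁻¹ := tsum_geometric_of_lt_one hr0 hr1
    _ = r ^ (a + 1) / (1 - r) := (div_eq_mul_inv _ _).symm

open ArithmeticFunction ArithmeticFunction.Moebius in
private lemma approx_pow {m : ℕ} (hm : 1 ≤ m) : Approx (fun z => z ^ m) := by
  classical
  apply approx_limit
  intro r hr0 hr1 ε hε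
  have h1r : 0 < 1 - r := by linarith
  obtain ⟨K, hK1, hKb⟩ := exists_pow_small hr0 hr1 1
    (by positivity : (0:ℝ) < ε / 2 * (1 - r))
  have hK0 : (0:ℝ) < K := by exact_mod_cast hK1
  obtain ⟨M, hKM, hMb⟩ := exists_pow_small hr0 hr1 K
    (by positivity : (0:ℝ) < ε / 2 * (1 - r) / K)
  have hM1 : 1 ≤ M := le_trans hK1 hKM
  -- the approximating function
  refine ⟨fun z => ∑ k ∈ Finset.Icc 1 K,
      ((μ k : ℤ) : ℂ) / (k : ℕ) * (-Complex.log (1 - z ^ (k * m))), ?_, ?_⟩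
  · apply approx_sum
    intro k hk
    have hk1 : 1 ≤ k := (Finset.mem_Icc.mp hk).1
    exact approx_smul _ (approx_Am (Nat.one_le_iff_ne_zero.mpr
      (Nat.mul_ne_zero (by omega) (by omega))))
  intro z hz
  have hz1 : ‖z‖ < 1 := lt_of_le_of_lt hz hr1
  -- the triple-indexed data
  set q : ℕ × ℕ → ℂ := fun p => ((μ p.1 : ℤ) : ℂ) / ((p.1 * p.2 : ℕ) : ℂ)
      * z ^ (p.1 * p.2 * m) with hq
  set W : ℕ → ℂ := fun j => ∑ p ∈ (Finset.Icc 1 K ×ˢ Finset.Icc 1 M).filter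
      (fun p => p.1 * p.2 = j), q p with hW
  set T : ℂ := ∑ k ∈ Finset.Icc 1 K, ((μ k : ℤ) : ℂ) / (k : ℕ)
      * (∑ n ∈ Finset.range (M + 1), (z ^ (k * m)) ^ n / (n : ℕ)) with hT
  -- coefficients are small
  have hcoef : ∀ k n : ℕ, 1 ≤ n → ‖((μ k : ℤ) : ℂ) / ((n : ℕ) : ℂ)‖ ≤ 1 / (n : ℝ) := by
    intro k n hk1
    have hknorm : ‖((n : ℕ) : ℂ)‖ = (n : ℝ) := by
      rw [Complex.norm_natCast]
    have hmu : ‖((μ k : ℤ) : ℂ)‖ ≤ 1 := by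
      have h1 : ((μ k : ℤ) : ℂ) = (((μ k : ℤ) : ℝ) : ℂ) := by push_cast; ring
      rw [h1, Complex.norm_real, Real.norm_eq_abs]
      have := abs_moebius_le_one (n := k)
      calc |((μ k : ℤ) : ℝ)| = ((|μ k| : ℤ) : ℝ) := by rw [Int.cast_abs]
        _ ≤ 1 := by exact_mod_cast this
    rw [norm_div, hknorm]
    have hk0c : (0:ℝ) < (n : ℝ) := by exact_mod_cast hk1
    exact (div_le_div_iff_of_pos_right hk0c).mpr hmu
  -- Step B : ‖g z - T‖ ≤ ε / 2
  have hstepB : ‖(∑ k ∈ Finset.Icc 1 K,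
      ((μ k : ℤ) : ℂ) / (k : ℕ) * (-Complex.log (1 - z ^ (k * m)))) - T‖ ≤ ε / 2 := by
    rw [hT, ← Finset.sum_sub_distrib]
    have hterm : ∀ k ∈ Finset.Icc 1 K,
        ‖((μ k : ℤ) : ℂ) / (k : ℕ) * (-Complex.log (1 - z ^ (k * m)))
          - ((μ k : ℤ) : ℂ) / (k : ℕ)
            * (∑ n ∈ Finset.range (M + 1), (z ^ (k * m)) ^ n / (n : ℕ))‖
          ≤ r ^ (M + 1) / (1 - r) := by
      intro k hk
      have hk1 : 1 ≤ k := (Finset.mem_Icc.mp hk).1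
      have hkm : k * m ≠ 0 := Nat.mul_ne_zero (by omega) (by omega)
      have hw : ‖z ^ (k * m)‖ ≤ r := by
        rw [norm_pow]
        exact le_trans (pow_le_of_le_one (norm_nonneg z) (le_of_lt hz1) hkm) hz
      have htail := log_tail (M + 1) hw hr1
      rw [← mul_sub, norm_mul]
      calc ‖((μ k : ℤ) : ℂ) / ((k : ℕ) : ℂ)‖
            * ‖(-Complex.log (1 - z ^ (k * m)))
              - ∑ n ∈ Finset.range (M + 1), (z ^ (k * m)) ^ n / (n : ℕ)‖
          ≤ 1 * (r ^ (M + 1) / (1 - r)) := by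
            apply mul_le_mul _ htail (norm_nonneg _) zero_le_one
            calc ‖((μ k : ℤ) : ℂ) / ((k : ℕ) : ℂ)‖ ≤ 1 / (k : ℝ) := hcoef k k hk1
              _ ≤ 1 := by
                  rw [div_le_one (by exact_mod_cast hk1 : (0:ℝ) < (k:ℝ))]
                  exact_mod_cast hk1
        _ = r ^ (M + 1) / (1 - r) := one_mul _
    calc ‖∑ k ∈ Finset.Icc 1 K,
          (((μ k : ℤ) : ℂ) / (k : ℕ) * (-Complex.log (1 - z ^ (k * m)))
            - ((μ k : ℤ) : ℂ) / (k : ℕ)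
              * (∑ n ∈ Finset.range (M + 1), (z ^ (k * m)) ^ n / (n : ℕ)))‖
        ≤ ∑ k ∈ Finset.Icc 1 K, (r ^ (M + 1) / (1 - r)) :=
          norm_sum_le_of_le _ hterm
      _ = (K : ℝ) * (r ^ (M + 1) / (1 - r)) := by
          rw [Finset.sum_const, Nat.card_Icc]
          simp [nsmul_eq_mul]
      _ ≤ (K : ℝ) * ((ε / 2 * (1 - r) / K) / (1 - r)) := by
          apply mul_le_mul_of_nonneg_left _ (le_of_lt hK0)
          exact (div_le_div_iff_of_pos_right h1r).mpr hMb
      _ = ε / 2 := by field_simp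
  -- fibers map into Icc 1 (K*M)
  have hmaps : ∀ p ∈ Finset.Icc 1 K ×ˢ Finset.Icc 1 M,
      p.1 * p.2 ∈ Finset.Icc 1 (K * M) := by
    intro p hp
    rw [Finset.mem_product, Finset.mem_Icc, Finset.mem_Icc] at hp
    rw [Finset.mem_Icc]
    exact ⟨Nat.one_le_iff_ne_zero.mpr (Nat.mul_ne_zero (by omega) (by omega)),
      Nat.mul_le_mul hp.1.2 hp.2.2⟩
  -- Step C : T equals the fiberwise sum
  have hTW : T = ∑ j ∈ Finset.Icc 1 (K * M), W j := by
    rw [hT]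
    have hinner : ∀ k ∈ Finset.Icc 1 K, ((μ k : ℤ) : ℂ) / (k : ℕ)
        * (∑ n ∈ Finset.range (M + 1), (z ^ (k * m)) ^ n / (n : ℕ))
        = ∑ n ∈ Finset.Icc 1 M, q (k, n) := by
      intro k hk
      have hk1 : 1 ≤ k := (Finset.mem_Icc.mp hk).1
      have hins : Finset.range (M + 1) = insert 0 (Finset.Icc 1 M) := by
        ext x; simp only [Finset.mem_range, Finset.mem_insert, Finset.mem_Icc]; omega
      rw [hins, Finset.sum_insert (by simp)]
      have h0 : ((z ^ (k * m)) ^ 0 / ((0:ℕ) : ℂ)) = 0 := by simp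
      rw [h0, zero_add, Finset.mul_sum]
      apply Finset.sum_congr rfl
      intro n hn
      have hn1 : 1 ≤ n := (Finset.mem_Icc.mp hn).1
      have hkc : ((k : ℕ) : ℂ) ≠ 0 := Nat.cast_ne_zero.mpr (by omega)
      have hnc : ((n : ℕ) : ℂ) ≠ 0 := Nat.cast_ne_zero.mpr (by omega)
      rw [hq]
      simp only
      rw [← pow_mul, show k * m * n = k * n * m from by ring, Nat.cast_mul]
      field_simp
    rw [Finset.sum_congr rfl hinner, hW]
    simp only
    rw [← Finset.sum_product (f := q)]
    exact (Finset.sum_fiberwise_of_maps_to hmaps q).symm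
  -- moebius sums over divisor antidiagonals
  have hmoe : ∀ j : ℕ, j ≠ 0 →
      (∑ p ∈ j.divisorsAntidiagonal, μ p.1) = if j = 1 then 1 else 0 := by
    intro j hj
    have h := congrArg (fun f : ArithmeticFunction ℤ => f j) moebius_mul_coe_zeta
    simp only [mul_apply, one_apply] at h
    rw [← h]
    apply Finset.sum_congr rfl
    intro p hp
    rw [Nat.mem_divisorsAntidiagonal] at hp
    have hp2 : p.2 ≠ 0 := by
      intro h0
      rw [h0, mul_zero] at hp
      exact hj hp.1.symm
    simp [hp2]
  -- small fibers
  have hfib : ∀ j ∈ Finset.Icc 1 K,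
      (Finset.Icc 1 K ×ˢ Finset.Icc 1 M).filter (fun p => p.1 * p.2 = j)
        = j.divisorsAntidiagonal := by
    intro j hj
    rw [Finset.mem_Icc] at hj
    ext p
    simp only [Finset.mem_filter, Finset.mem_product, Finset.mem_Icc,
      Nat.mem_divisorsAntidiagonal]
    constructor
    · rintro ⟨_, h3⟩
      exact ⟨h3, by omega⟩
    · rintro ⟨hpq, hj0⟩
      have hp1 : p.1 ≠ 0 := by rintro h0; rw [h0, zero_mul] at hpq; omega
      have hp2 : p.2 ≠ 0 := by rintro h0; rw [h0, mul_zero] at hpq; omega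
      have hle1 : p.1 ≤ j := Nat.le_of_dvd (by omega) ⟨p.2, hpq.symm⟩
      have hle2 : p.2 ≤ j := Nat.le_of_dvd (by omega) ⟨p.1, by rw [← hpq]; ring⟩
      exact ⟨⟨⟨by omega, by omega⟩, ⟨by omega, by omega⟩⟩, hpq⟩
  have hWsmall : ∀ j ∈ Finset.Icc 1 K, W j = if j = 1 then z ^ m else 0 := by
    intro j hj
    have hj1 : 1 ≤ j := (Finset.mem_Icc.mp hj).1
    rw [hW]
    simp only
    rw [hfib j hj]
    have e : ∀ p ∈ j.divisorsAntidiagonal,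
        q p = ((μ p.1 : ℤ) : ℂ) * (z ^ (j * m) / ((j : ℕ) : ℂ)) := by
      intro p hp
      rw [Nat.mem_divisorsAntidiagonal] at hp
      rw [hq]
      simp only
      rw [hp.1]
      ring
    rw [Finset.sum_congr rfl e, ← Finset.sum_mul]
    have hcast : (∑ p ∈ j.divisorsAntidiagonal, ((μ p.1 : ℤ) : ℂ))
        = (((if j = 1 then 1 else 0 : ℤ)) : ℂ) := by
      rw [← Int.cast_sum, hmoe j (by omega)]
    rw [hcast]
    split_ifs with h
    · subst h
      simp
    · simp
  -- big fibers
  have hWbig : ∀ j ∈ Finset.Ioc K (K * M), ‖W j‖ ≤ r ^ j := by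
    intro j hj
    rw [Finset.mem_Ioc] at hj
    have hj1 : 1 ≤ j := by omega
    have hj0 : (0:ℝ) < (j : ℝ) := by exact_mod_cast hj1
    set s := (Finset.Icc 1 K ×ˢ Finset.Icc 1 M).filter (fun p => p.1 * p.2 = j) with hs
    have hcard : (s.card : ℝ) ≤ (j : ℝ) := by
      have : s.card ≤ (Finset.Icc 1 j).card := by
        apply Finset.card_le_card_of_injOn (fun p => p.1)
        · intro p hp
          rw [Finset.mem_coe, hs, Finset.mem_filter] at hp
          have hpq := hp.2
          have hp1 : p.1 ≠ 0 := by rintro h0; rw [h0, zero_mul] at hpq; omega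
          have hp2 : p.2 ≠ 0 := by
            rintro h0; rw [h0, mul_zero] at hpq; omega
          have : p.1 ≤ j := Nat.le_of_dvd (by omega) ⟨p.2, hpq.symm⟩
          simp only [Finset.coe_Icc, Set.mem_Icc]
          omega
        · intro p hp p' hp' hpp
          rw [Finset.mem_coe, hs, Finset.mem_filter] at hp hp'
          have hpp' : p.1 = p'.1 := hpp
          have hpq := hp.2
          have hpq' := hp'.2
          have hp1 : p.1 ≠ 0 := by rintro h0; rw [h0, zero_mul] at hpq; omega
          have h2 : p.2 = p'.2 := by
            apply Nat.eq_of_mul_eq_mul_left (Nat.pos_of_ne_zero hp1)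
            rw [hpq, hpp', hpq']
          exact Prod.ext hpp' h2
      rw [Nat.card_Icc] at this
      exact_mod_cast by omega
    have hterm : ∀ p ∈ s, ‖q p‖ ≤ r ^ j / (j : ℝ) := by
      intro p hp
      rw [hs, Finset.mem_filter] at hp
      have hpq := hp.2
      have hp1 : 1 ≤ p.1 := by
        rcases Nat.eq_zero_or_pos p.1 with h0 | h; · rw [h0, zero_mul] at hpq; omega
        · exact h
      rw [hq]
      simp only
      rw [hpq, norm_mul, norm_pow]
      have h1 : ‖((μ p.1 : ℤ) : ℂ) / ((j : ℕ) : ℂ)‖ ≤ 1 / (j : ℝ) :=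
        hcoef p.1 j hj1
      have h2 : ‖z‖ ^ (j * m) ≤ r ^ j := by
        calc ‖z‖ ^ (j * m) ≤ r ^ (j * m) := pow_le_pow_left₀ (norm_nonneg z) hz _
          _ ≤ r ^ j := pow_le_pow_of_le_one hr0 (le_of_lt hr1)
              (Nat.le_mul_of_pos_right j (by omega))
      calc ‖((μ p.1 : ℤ) : ℂ) / ((j : ℕ) : ℂ)‖ * ‖z‖ ^ (j * m)
          ≤ (1 / (j : ℝ)) * r ^ j := by
            apply mul_le_mul h1 h2 (by positivity) (by positivity)
        _ = r ^ j / (j : ℝ) := by ring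
    have hWs : W j = ∑ p ∈ s, q p := rfl
    calc ‖W j‖ = ‖∑ p ∈ s, q p‖ := by rw [hWs]
      _ ≤ ∑ p ∈ s, (r ^ j / (j : ℝ)) := norm_sum_le_of_le _ hterm
      _ = (s.card : ℝ) * (r ^ j / (j : ℝ)) := by
          rw [Finset.sum_const, nsmul_eq_mul]
      _ ≤ (j : ℝ) * (r ^ j / (j : ℝ)) := by
          apply mul_le_mul_of_nonneg_right hcard (by positivity)
      _ = r ^ j := by field_simp
  -- Step E : splitting and conclusion
  have hKKM : K ≤ K * M := Nat.le_mul_of_pos_right K (by omega)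
  have hIccIoc : ∀ a : ℕ, Finset.Icc 1 a = Finset.Ioc 0 a := by
    intro a; ext x; simp only [Finset.mem_Icc, Finset.mem_Ioc]; omega
  have hsplit : ∑ j ∈ Finset.Icc 1 (K * M), W j
      = (∑ j ∈ Finset.Icc 1 K, W j) + ∑ j ∈ Finset.Ioc K (K * M), W j := by
    rw [hIccIoc (K * M), hIccIoc K,
      Finset.sum_Ioc_consecutive _ (Nat.zero_le K) hKKM]
  have hfirst : ∑ j ∈ Finset.Icc 1 K, W j = z ^ m := by
    rw [Finset.sum_congr rfl hWsmall,
      Finset.sum_ite_eq' (Finset.Icc 1 K) 1 (fun _ => z ^ m),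
      if_pos (Finset.mem_Icc.mpr ⟨le_refl 1, hK1⟩)]
  have htailE : ‖∑ j ∈ Finset.Ioc K (K * M), W j‖ ≤ ε / 2 := by
    calc ‖∑ j ∈ Finset.Ioc K (K * M), W j‖
        ≤ ∑ j ∈ Finset.Ioc K (K * M), r ^ j := norm_sum_le_of_le _ hWbig
      _ ≤ r ^ (K + 1) / (1 - r) := geom_Ioc_le hr0 hr1 K (K * M)
      _ ≤ ε / 2 := by
          rw [div_le_iff₀ h1r]
          exact hKb
  calc ‖z ^ m - ∑ k ∈ Finset.Icc 1 K,
        ((μ k : ℤ) : ℂ) / (k : ℕ) * (-Complex.log (1 - z ^ (k * m)))‖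
      = ‖(z ^ m - T) + (T - ∑ k ∈ Finset.Icc 1 K,
          ((μ k : ℤ) : ℂ) / (k : ℕ) * (-Complex.log (1 - z ^ (k * m))))‖ := by
        congr 1
        ring
    _ ≤ ‖z ^ m - T‖ + ‖T - ∑ k ∈ Finset.Icc 1 K,
          ((μ k : ℤ) : ℂ) / (k : ℕ) * (-Complex.log (1 - z ^ (k * m)))‖ :=
        norm_add_le _ _
    _ ≤ ε / 2 + ε / 2 := by
        apply add_le_add
        · rw [hTW, hsplit, hfirst]
          have : z ^ m - (z ^ m + ∑ j ∈ Finset.Ioc K (K * M), W j)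
              = -(∑ j ∈ Finset.Ioc K (K * M), W j) := by ring
          rw [this, norm_neg]
          exact htailE
        · rw [norm_sub_rev]
          exact hstepB
    _ = ε := by ring

private lemma approx_pow0 (m : ℕ) : Approx (fun z => z ^ m) := by
  rcases Nat.eq_zero_or_pos m with rfl | hm
  · exact approx_congr approx_one (fun z _ => (pow_zero z).symm)
  · exact approx_pow hm

end Stmt18Aux

theorem stmt18 (f : ℂ → ℂ) (hf : DifferentiableOn ℂ f (Metric.ball (0 : ℂ) 1))
    (hf2 : Summable fun n : ℕ => ‖iteratedDeriv n f 0 / (n.factorial : ℂ)‖ ^ 2)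
    (K : Set ℂ) (hK : IsCompact K) (hKsub : K ⊆ Metric.ball (0 : ℂ) 1)
    (ε : ℝ) (hε : 0 < ε) :
    ∃ (N : ℕ) (c : ℕ → ℂ), ∀ z ∈ K,
      ‖f z - ∑ k ∈ Finset.Icc 2 N,
          c k * ((1 - z)⁻¹ * Complex.log ((∑ i ∈ Finset.range k, z ^ i) / k))‖ < ε := by
  classical
  rcases Set.eq_empty_or_nonempty K with rfl | hKne
  · exact ⟨0, fun _ => 0, fun z hz => absurd hz (Set.notMem_empty z)⟩
  obtain ⟨z₀, hz₀K, hmax'⟩ := hK.exists_isMaxOn hKne continuous_norm.continuousOn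
  have hmax : ∀ z ∈ K, ‖z‖ ≤ ‖z₀‖ := fun z hz => hmax' hz
  set r : ℝ := ‖z₀‖ with hrdef
  have hr0 : 0 ≤ r := norm_nonneg _
  have hr1 : r < 1 := by
    have := hKsub hz₀K
    rwa [Metric.mem_ball, dist_zero_right] at this
  have h1r : 0 < 1 - r := by linarith
  -- power series of f on the unit ball
  set R : NNReal := ⟨(r + 3) / 4, by positivity⟩ with hRdef
  have hRval : (R : ℝ) = (r + 3) / 4 := rfl
  have hR1 : (R : ℝ) < 1 := by rw [hRval]; linarith
  have hf' : DifferentiableOn ℂ f (Metric.closedBall (0 : ℂ) R) :=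
    hf.mono (Metric.closedBall_subset_ball hR1)
  have hps := hf'.hasFPowerSeriesOnBall
    (by rw [← NNReal.coe_pos, hRval]; positivity)
  set p := cauchyPowerSeries f 0 ((R : NNReal) : ℝ) with hpdef
  set r' : NNReal := ⟨(r + 1) / 2, by positivity⟩ with hr'def
  have hr'val : (r' : ℝ) = (r + 1) / 2 := rfl
  have hr'lt : (r' : ENNReal) < ((R : NNReal) : ENNReal) := by
    rw [ENNReal.coe_lt_coe, ← NNReal.coe_lt_coe, hr'val, hRval]
    linarith
  have hunif := hps.tendstoUniformlyOn' hr'lt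
  rw [Metric.tendstoUniformlyOn_iff] at hunif
  obtain ⟨n, hn⟩ := Filter.eventually_atTop.mp (hunif (ε / 2) (by linarith))
  have hn' := hn n le_rfl
  set P : ℂ → ℂ := fun w => p.partialSum n w with hPdef
  -- Approx of (1 - w) * P w
  have hQ : Approx (fun w => (1 - w) * P w) := by
    have hterm : ∀ i ∈ Finset.range n,
        Approx (fun w : ℂ => p.coeff i * w ^ i - p.coeff i * w ^ (i + 1)) := by
      intro i _
      exact approx_sub (approx_smul _ (approx_pow0 i)) (approx_smul _ (approx_pow0 (i + 1)))
    apply approx_congr (approx_sum (Finset.range n) _ hterm)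
    intro w _
    rw [hPdef]
    simp only [FormalMultilinearSeries.partialSum]
    rw [Finset.mul_sum]
    apply Finset.sum_congr rfl
    intro i _
    rw [FormalMultilinearSeries.apply_eq_pow_smul_coeff, smul_eq_mul]
    ring
  obtain ⟨N, c, hNc⟩ := hQ r hr0 hr1 (ε / 4 * (1 - r)) (by positivity)
  refine ⟨N, c, fun z hzK => ?_⟩
  have hzr : ‖z‖ ≤ r := hmax z hzK
  have hz1 : ‖z‖ < 1 := lt_of_le_of_lt hzr hr1
  have h1z : (1 : ℂ) - z ≠ 0 := one_sub_ne hz1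
  have hzball : z ∈ Metric.ball (0 : ℂ) (r' : ℝ) := by
    rw [Metric.mem_ball, dist_zero_right, hr'val]
    linarith
  have hfP : ‖f z - P z‖ ≤ ε / 2 := by
    have := hn' z hzball
    rw [dist_eq_norm] at this
    simpa using le_of_lt this
  have hnorm1z : ‖((1 : ℂ) - z)⁻¹‖ ≤ (1 - r)⁻¹ := by
    rw [norm_inv]
    apply inv_anti₀ h1r
    calc 1 - r ≤ 1 - ‖z‖ := by linarith
      _ = ‖(1 : ℂ)‖ - ‖z‖ := by rw [norm_one]
      _ ≤ ‖(1 : ℂ) - z‖ := norm_sub_norm_le _ _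
  have e : ∑ k ∈ Finset.Icc 2 N,
      c k * ((1 - z)⁻¹ * Complex.log ((∑ i ∈ Finset.range k, z ^ i) / k))
      = (1 - z)⁻¹ * ∑ k ∈ Finset.Icc 2 N, c k * phi k z := by
    rw [Finset.mul_sum]
    apply Finset.sum_congr rfl
    intro k _
    rw [phi]
    ring
  have e2 : ((1 : ℂ) - z)⁻¹ * ((1 - z) * P z) = P z := by
    field_simp
  have hkey : ‖f z - ∑ k ∈ Finset.Icc 2 N,
      c k * ((1 - z)⁻¹ * Complex.log ((∑ i ∈ Finset.range k, z ^ i) / k))‖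
      ≤ ε / 2 + ε / 4 := by
    rw [e]
    calc ‖f z - (1 - z)⁻¹ * ∑ k ∈ Finset.Icc 2 N, c k * phi k z‖
        = ‖(f z - P z) + (1 - z)⁻¹
            * ((1 - z) * P z - ∑ k ∈ Finset.Icc 2 N, c k * phi k z)‖ := by
          rw [mul_sub, e2]
          congr 1
          ring
      _ ≤ ‖f z - P z‖ + ‖(1 - z)⁻¹
            * ((1 - z) * P z - ∑ k ∈ Finset.Icc 2 N, c k * phi k z)‖ := norm_add_le _ _
      _ ≤ ε / 2 + (1 - r)⁻¹ * (ε / 4 * (1 - r)) := by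
          apply add_le_add hfP
          rw [norm_mul]
          apply mul_le_mul hnorm1z (hNc z hzr) (norm_nonneg _) (by positivity)
      _ = ε / 2 + ε / 4 := by
          congr 1
          field_simp
  calc ‖f z - ∑ k ∈ Finset.Icc 2 N,
      c k * ((1 - z)⁻¹ * Complex.log ((∑ i ∈ Finset.range k, z ^ i) / k))‖
      ≤ ε / 2 + ε / 4 := hkey
    _ < ε := by linarith
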